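/- Let 1 ≤ ℓ ≤ k and let π₁, …, π_ℓ be up-right paths with values in {1,…,N}×{1,…,k} having pairwise disjoint supports and starting abscissas all equal to 1. Then there exist up-right paths π'₁, …, π'_ℓ with pairwise disjoint supports, starting abscissas all equal to 1 and ending abscissas all equal to N, such that the union of the supports of the π_i is contained in the union of the supports of the π'_i. -/

import Mathlib

/-- `IsUpRightPath N k p π` : `π` is an up-right path on `{1,…,p}` with values in
`{1,…,N} × {1,…,k}`: at each step, exactly one coordinate increases by `1`. -/
def IsUpRightPath (N k p : ℕ) (π : ℕ → ℕ × ℕ) : Prop :=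
  (∀ i, 1 ≤ i → i ≤ p → (1 ≤ (π i).1 ∧ (π i).1 ≤ N) ∧ (1 ≤ (π i).2 ∧ (π i).2 ≤ k)) ∧
  (∀ i, 2 ≤ i → i ≤ p →
    ((π i).1 = (π (i - 1)).1 + 1 ∧ (π i).2 = (π (i - 1)).2) ∨
    ((π i).1 = (π (i - 1)).1 ∧ (π i).2 = (π (i - 1)).2 + 1))

/-- The support of a path `π` defined on `{1,…,p}`: its image. -/
def pathSupport (p : ℕ) (π : ℕ → ℕ × ℕ) : Set (ℕ × ℕ) := π '' (Set.Icc 1 p)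


namespace UpRightAux

/-! ### Walks from monotone profiles -/

def walk (h : ℕ → ℕ) : ℕ → ℕ × ℕ
  | 0 => (0, 0)
  | 1 => (1, h 0)
  | n + 2 =>
      if (walk h (n + 1)).2 < h (walk h (n + 1)).1 then
        ((walk h (n + 1)).1, (walk h (n + 1)).2 + 1)
      else ((walk h (n + 1)).1 + 1, (walk h (n + 1)).2)

lemma walk_one (h : ℕ → ℕ) : walk h 1 = (1, h 0) := rfl

lemma walk_succ (h : ℕ → ℕ) (n : ℕ) (hn : 1 ≤ n) :
    walk h (n + 1) =
      if (walk h n).2 < h (walk h n).1 then ((walk h n).1, (walk h n).2 + 1)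
      else ((walk h n).1 + 1, (walk h n).2) := by
  obtain ⟨m, rfl⟩ : ∃ m, n = m + 1 := ⟨n - 1, by omega⟩
  rfl

lemma walk_inv (h : ℕ → ℕ) (hmono : Monotone h) (N : ℕ) (hN : 1 ≤ N) :
    ∀ i, 1 ≤ i → i ≤ N + h N - h 0 →
      1 ≤ (walk h i).1 ∧ (walk h i).1 ≤ N ∧
      h ((walk h i).1 - 1) ≤ (walk h i).2 ∧ (walk h i).2 ≤ h ((walk h i).1) ∧
      (walk h i).1 + (walk h i).2 = i + h 0 := by
  intro i
  induction i with
  | zero => intro h1 _; omega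
  | succ n ih =>
    intro _ hip
    by_cases hn : n = 0
    · subst hn
      have h01 : h 0 ≤ h 1 := hmono (by omega)
      exact ⟨le_rfl, hN, le_rfl, h01, rfl⟩
    · have hn1 : 1 ≤ n := by omega
      obtain ⟨hX1, hXN, hlow, hup, hsum⟩ := ih hn1 (by omega)
      rw [walk_succ h n hn1]
      by_cases hc : (walk h n).2 < h (walk h n).1
      · rw [if_pos hc]
        refine ⟨hX1, hXN, ?_, ?_, ?_⟩
        · show h ((walk h n).1 - 1) ≤ (walk h n).2 + 1
          omega
        · show (walk h n).2 + 1 ≤ h (walk h n).1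
          omega
        · show (walk h n).1 + ((walk h n).2 + 1) = n + 1 + h 0
          omega
      · rw [if_neg hc]
        have hYX : (walk h n).2 = h (walk h n).1 := le_antisymm hup (not_lt.mp hc)
        have hXlt : (walk h n).1 < N := by
          rcases Nat.lt_or_ge (walk h n).1 N with h' | h'
          · exact h'
          · exfalso
            have hXN' : (walk h n).1 = N := le_antisymm hXN h'
            rw [hXN'] at hYX hsum
            have h0N : h 0 ≤ h N := hmono (Nat.zero_le N)
            omega
        refine ⟨?_, ?_, ?_, ?_, ?_⟩
        · show 1 ≤ (walk h n).1 + 1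
          omega
        · show (walk h n).1 + 1 ≤ N
          omega
        · show h ((walk h n).1 + 1 - 1) ≤ (walk h n).2
          rw [Nat.add_sub_cancel, hYX]
        · show (walk h n).2 ≤ h ((walk h n).1 + 1)
          rw [hYX]; exact hmono (by omega)
        · show (walk h n).1 + 1 + (walk h n).2 = n + 1 + h 0
          omega

lemma walk_last (h : ℕ → ℕ) (hmono : Monotone h) (N : ℕ) (hN : 1 ≤ N) :
    walk h (N + h N - h 0) = (N, h N) := by
  have h0N : h 0 ≤ h N := hmono (Nat.zero_le N)
  obtain ⟨hX1, hXN, hlow, hup, hsum⟩ :=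
    walk_inv h hmono N hN (N + h N - h 0) (by omega) le_rfl
  have hXh : h ((walk h (N + h N - h 0)).1) ≤ h N := hmono hXN
  have hX : (walk h (N + h N - h 0)).1 = N := by omega
  have hY : (walk h (N + h N - h 0)).2 = h N := by omega
  exact Prod.ext hX hY

lemma walk_mem (h : ℕ → ℕ) (hmono : Monotone h) (N : ℕ) (hN : 1 ≤ N)
    (x y : ℕ) (hx1 : 1 ≤ x) (hxN : x ≤ N) (hy1 : h (x - 1) ≤ y) (hy2 : y ≤ h x) :
    ∃ i, 1 ≤ i ∧ i ≤ N + h N - h 0 ∧ walk h i = (x, y) := by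
  have h0le : h 0 ≤ h (x - 1) := hmono (Nat.zero_le _)
  have hxN' : h x ≤ h N := hmono hxN
  refine ⟨x + y - h 0, by omega, by omega, ?_⟩
  obtain ⟨hX1, hXN, hlow, hup, hsum⟩ :=
    walk_inv h hmono N hN (x + y - h 0) (by omega) (by omega)
  set q := walk h (x + y - h 0) with hq
  have hsum' : q.1 + q.2 = x + y := by omega
  rcases lt_trichotomy q.1 x with hlt | heq | hgt
  · exfalso
    have : h q.1 ≤ h (x - 1) := hmono (by omega)
    omega
  · have : q.2 = y := by omega
    exact Prod.ext heq this
  · exfalso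
    have : h x ≤ h (q.1 - 1) := hmono (by omega)
    omega

/-! ### Profiles of up-right paths -/

lemma path_mono (N k p : ℕ) (π : ℕ → ℕ × ℕ) (hπ : IsUpRightPath N k p π)
    (i : ℕ) (h1 : 1 ≤ i) :
    ∀ i', i ≤ i' → i' ≤ p → (π i).1 ≤ (π i').1 ∧ (π i).2 ≤ (π i').2 := by
  intro i'
  induction i' with
  | zero => intro hii _; exact absurd (h1.trans hii) (by omega)
  | succ n ih =>
    intro hii h2
    rcases Nat.eq_or_lt_of_le hii with heq | hlt
    · rw [heq]; exact ⟨le_rfl, le_rfl⟩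
    · have := ih (by omega) (by omega)
      have hstep := hπ.2 (n + 1) (by omega) h2
      simp only [Nat.add_sub_cancel] at hstep
      rcases hstep with ⟨ha, hb⟩ | ⟨ha, hb⟩ <;> omega

def Gf (p : ℕ) (π : ℕ → ℕ × ℕ) (x : ℕ) : ℕ :=
  max (π 1).2 (((Finset.Icc 1 p).filter fun i => (π i).1 ≤ x).sup fun i => (π i).2)

lemma Gf_mono (p : ℕ) (π : ℕ → ℕ × ℕ) : Monotone (Gf p π) := by
  intro x x' hxx
  apply max_le_max le_rfl
  apply Finset.sup_mono
  intro i hi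
  rw [Finset.mem_filter] at hi ⊢
  exact ⟨hi.1, hi.2.trans hxx⟩

lemma Gf_le_k (N k p : ℕ) (π : ℕ → ℕ × ℕ) (hπ : IsUpRightPath N k p π) (hp : 1 ≤ p)
    (x : ℕ) : Gf p π x ≤ k := by
  apply max_le (hπ.1 1 le_rfl hp).2.2
  apply Finset.sup_le
  intro i hi
  rw [Finset.mem_filter, Finset.mem_Icc] at hi
  exact (hπ.1 i hi.1.1 hi.1.2).2.2

lemma Gf_low (N k p : ℕ) (π : ℕ → ℕ × ℕ) (hπ : IsUpRightPath N k p π)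
    (i : ℕ) (h1 : 1 ≤ i) (h2 : i ≤ p) : Gf p π ((π i).1 - 1) ≤ (π i).2 := by
  apply max_le (path_mono N k p π hπ 1 le_rfl i h1 h2).2
  apply Finset.sup_le
  intro i' hi'
  rw [Finset.mem_filter, Finset.mem_Icc] at hi'
  have hx1 : 1 ≤ (π i).1 := (hπ.1 i h1 h2).1.1
  by_cases hcmp : i ≤ i'
  · have := (path_mono N k p π hπ i h1 i' hcmp hi'.1.2).1
    omega
  · exact (path_mono N k p π hπ i' hi'.1.1 i (by omega) h2).2

lemma Gf_high (p : ℕ) (π : ℕ → ℕ × ℕ) (i : ℕ) (h1 : 1 ≤ i) (h2 : i ≤ p) :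
    (π i).2 ≤ Gf p π (π i).1 := by
  have hmem : i ∈ (Finset.Icc 1 p).filter fun i' => (π i').1 ≤ (π i).1 := by
    rw [Finset.mem_filter, Finset.mem_Icc]
    exact ⟨⟨h1, h2⟩, le_rfl⟩
  exact le_trans (Finset.le_sup (f := fun i' => (π i').2) hmem) (le_max_right _ _)

/-! ### Order statistics via counting -/

def cnt (L : ℕ) (g : Fin L → ℕ → ℕ) (x y : ℕ) : ℕ :=
  (Finset.univ.filter fun j => g j x ≤ y).card

noncomputable def sfun (L : ℕ) (g : Fin L → ℕ → ℕ) (r x : ℕ) : ℕ :=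
  sInf {y | r ≤ cnt L g x y}

noncomputable def dfun (L : ℕ) (g : Fin L → ℕ → ℕ) : ℕ → ℕ → ℕ
  | 0, x => sfun L g L x
  | t + 1, x => min (sfun L g (L - t - 1) x) (dfun L g t (x - 1) - 1)

variable {L k : ℕ} {g : Fin L → ℕ → ℕ}

lemma cnt_mono_y (x : ℕ) {y y' : ℕ} (hy : y ≤ y') : cnt L g x y ≤ cnt L g x y' := by
  apply Finset.card_le_card
  intro j hj
  rw [Finset.mem_filter] at hj ⊢
  exact ⟨hj.1, hj.2.trans hy⟩

lemma cnt_anti_x (hmono : ∀ j, Monotone (g j)) {x x' : ℕ} (hx : x ≤ x') (y : ℕ) :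
    cnt L g x' y ≤ cnt L g x y := by
  apply Finset.card_le_card
  intro j hj
  rw [Finset.mem_filter] at hj ⊢
  exact ⟨hj.1, le_trans (hmono j hx) hj.2⟩

lemma cnt_top (hk : ∀ j x, g j x ≤ k) (x : ℕ) : cnt L g x k = L := by
  unfold cnt
  rw [Finset.filter_true_of_mem fun j _ => hk j x]
  simp

lemma cnt_le_card (x y : ℕ) : cnt L g x y ≤ L := by
  refine le_trans (Finset.card_filter_le _ _) ?_
  simp

lemma one_le_cnt {j : Fin L} {x y : ℕ} (hj : g j x ≤ y) : 1 ≤ cnt L g x y := by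
  refine Finset.card_pos.mpr ⟨j, ?_⟩
  rw [Finset.mem_filter]
  exact ⟨Finset.mem_univ _, hj⟩

lemma sfun_le_iff (hk : ∀ j x, g j x ≤ k) {r : ℕ} (hr : r ≤ L) (x y : ℕ) :
    sfun L g r x ≤ y ↔ r ≤ cnt L g x y := by
  constructor
  · intro hle
    have hne : {y | r ≤ cnt L g x y}.Nonempty := ⟨k, by rw [Set.mem_setOf_eq, cnt_top hk]; exact hr⟩
    have hmem : r ≤ cnt L g x (sfun L g r x) := Nat.sInf_mem hne
    exact hmem.trans (cnt_mono_y x hle)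
  · intro hc
    exact Nat.sInf_le hc

lemma sfun_ge (hk : ∀ j x, g j x ≤ k) (hcard : ∀ x y, cnt L g x y ≤ y)
    {r : ℕ} (hr1 : 1 ≤ r) (hr : r ≤ L) (x : ℕ) : r ≤ sfun L g r x := by
  by_contra hcon
  push_neg at hcon
  have h1 : sfun L g r x ≤ r - 1 := by omega
  have h2 : r ≤ cnt L g x (r - 1) := (sfun_le_iff hk hr x (r - 1)).mp h1
  have h3 := hcard x (r - 1)
  omega

lemma sfun_le_k (hk : ∀ j x, g j x ≤ k) {r : ℕ} (hr : r ≤ L) (x : ℕ) :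
    sfun L g r x ≤ k :=
  (sfun_le_iff hk hr x k).mpr (by rw [cnt_top hk]; exact hr)

lemma sfun_mono_x (hk : ∀ j x, g j x ≤ k) (hmono : ∀ j, Monotone (g j))
    {r : ℕ} (hr : r ≤ L) {x x' : ℕ} (hx : x ≤ x') : sfun L g r x ≤ sfun L g r x' := by
  rw [sfun_le_iff hk hr]
  have h1 : r ≤ cnt L g x' (sfun L g r x') := by
    rw [← sfun_le_iff hk hr]
  exact h1.trans (cnt_anti_x hmono hx _)

lemma sfun_mono_r (hk : ∀ j x, g j x ≤ k) {r r' : ℕ} (hrr : r ≤ r') (hr : r' ≤ L)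
    (x : ℕ) : sfun L g r x ≤ sfun L g r' x := by
  rw [sfun_le_iff hk (hrr.trans hr)]
  have h1 : r' ≤ cnt L g x (sfun L g r' x) := by
    rw [← sfun_le_iff hk hr]
  omega

lemma dfun_zero (x : ℕ) : dfun L g 0 x = sfun L g L x := rfl

lemma dfun_succ (t x : ℕ) :
    dfun L g (t + 1) x = min (sfun L g (L - t - 1) x) (dfun L g t (x - 1) - 1) := rfl

lemma dfun_le_sfun (t x : ℕ) : dfun L g t x ≤ sfun L g (L - t) x := by
  cases t with
  | zero => simp [dfun_zero]
  | succ t =>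
    rw [dfun_succ]
    have : L - (t + 1) = L - t - 1 := by omega
    rw [this]
    exact min_le_left _ _

lemma dfun_mono_x (hk : ∀ j x, g j x ≤ k) (hmono : ∀ j, Monotone (g j)) (t : ℕ) :
    Monotone (dfun L g t) := by
  induction t with
  | zero =>
    intro x x' hx
    exact sfun_mono_x hk hmono le_rfl hx
  | succ t ih =>
    intro x x' hx
    rw [dfun_succ, dfun_succ]
    exact min_le_min (sfun_mono_x hk hmono (by omega) hx)
      (Nat.sub_le_sub_right (ih (by omega)) 1)

lemma dfun_ge (hk : ∀ j x, g j x ≤ k) (hcard : ∀ x y, cnt L g x y ≤ y) (t x : ℕ) :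
    L - t ≤ dfun L g t x := by
  induction t generalizing x with
  | zero =>
    rw [dfun_zero]
    rcases Nat.eq_zero_or_pos L with h | h
    · omega
    · simpa using sfun_ge hk hcard h le_rfl x
  | succ t ih =>
    rw [dfun_succ]
    refine le_min ?_ ?_
    · rcases Nat.eq_zero_or_pos (L - t - 1) with h | h
      · omega
      · have := sfun_ge hk hcard h (by omega) x
        omega
    · have := ih (x - 1)
      omega

lemma dfun_le_k (hk : ∀ j x, g j x ≤ k) (t x : ℕ) : dfun L g t x ≤ k :=
  (dfun_le_sfun t x).trans (sfun_le_k hk (by omega) x)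

lemma dfun_chain (hk : ∀ j x, g j x ≤ k) (hcard : ∀ x y, cnt L g x y ≤ y)
    (hmono : ∀ j, Monotone (g j)) :
    ∀ (n t' : ℕ), t' + n + 2 ≤ L → ∀ x, dfun L g (t' + n + 1) x < dfun L g t' (x - 1) := by
  intro n
  induction n with
  | zero =>
    intro t' hL x
    simp only [Nat.add_zero]
    have h1 : dfun L g (t' + 1) x ≤ dfun L g t' (x - 1) - 1 := by
      rw [dfun_succ]; exact min_le_right _ _
    have h2 : L - t' ≤ dfun L g t' (x - 1) := dfun_ge hk hcard t' (x - 1)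
    omega
  | succ n ih =>
    intro t' hL x
    have h1 : dfun L g (t' + 1 + n + 1) x < dfun L g (t' + 1) (x - 1) :=
      ih (t' + 1) (by omega) x
    have h2 : dfun L g (t' + 1) (x - 1) ≤ dfun L g t' (x - 1 - 1) - 1 := by
      rw [dfun_succ]; exact min_le_right _ _
    have h3 : dfun L g t' (x - 1 - 1) ≤ dfun L g t' (x - 1) :=
      dfun_mono_x hk hmono t' (by omega)
    have h4 : t' + 1 + n + 1 = t' + (n + 1) + 1 := by omega
    rw [h4] at h1
    omega

lemma dfun_cover (hk : ∀ j x, g j x ≤ k) :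
    ∀ t x y, dfun L g t (x - 1) ≤ y → y ≤ sfun L g (L - t) x →
      ∃ u, u ≤ t ∧ dfun L g u (x - 1) ≤ y ∧ y ≤ dfun L g u x := by
  intro t
  induction t with
  | zero =>
    intro x y h1 h2
    refine ⟨0, le_rfl, h1, ?_⟩
    rw [dfun_zero]
    simpa using h2
  | succ t ih =>
    intro x y h1 h2
    by_cases hy : y ≤ dfun L g (t + 1) x
    · exact ⟨t + 1, le_rfl, h1, hy⟩
    · push_neg at hy
      have hA : y ≤ sfun L g (L - t - 1) x := by
        have : L - t - 1 = L - (t + 1) := by omega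
        rw [this]; exact h2
      have hB : dfun L g t (x - 1) - 1 < y := by
        rw [dfun_succ] at hy
        rcases le_total (sfun L g (L - t - 1) x) (dfun L g t (x - 1) - 1) with hle | hle
        · rw [min_eq_left hle] at hy; omega
        · rw [min_eq_right hle] at hy; exact hy
      have h1' : dfun L g t (x - 1) ≤ y := by omega
      have h2' : y ≤ sfun L g (L - t) x :=
        hA.trans (sfun_mono_r hk (by omega) (by omega) x)
      obtain ⟨u, hu, ha, hb⟩ := ih x y h1' h2'
      exact ⟨u, by omega, ha, hb⟩

lemma walk_isPath (h : ℕ → ℕ) (hmono : Monotone h) (N k : ℕ) (hN : 1 ≤ N)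
    (hpos : 1 ≤ h 0) (hk : h N ≤ k) :
    IsUpRightPath N k (N + h N - h 0) (walk h) := by
  constructor
  · intro i hi1 hi2
    obtain ⟨hX1, hXN, hlow, hup, _⟩ := walk_inv h hmono N hN i hi1 hi2
    have h1 : h 0 ≤ h ((walk h i).1 - 1) := hmono (Nat.zero_le _)
    have h2 : h (walk h i).1 ≤ h N := hmono hXN
    exact ⟨⟨hX1, hXN⟩, by omega, by omega⟩
  · intro i hi2 hip
    obtain ⟨n, rfl⟩ : ∃ n, i = n + 1 := ⟨i - 1, by omega⟩
    simp only [Nat.add_sub_cancel]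
    rw [walk_succ h n (by omega)]
    by_cases hc : (walk h n).2 < h (walk h n).1
    · rw [if_pos hc]
      right
      exact ⟨rfl, rfl⟩
    · rw [if_neg hc]
      left
      exact ⟨rfl, rfl⟩

lemma walk_support (h : ℕ → ℕ) (hmono : Monotone h) (N : ℕ) (hN : 1 ≤ N) :
    pathSupport (N + h N - h 0) (walk h) =
      {q : ℕ × ℕ | 1 ≤ q.1 ∧ q.1 ≤ N ∧ h (q.1 - 1) ≤ q.2 ∧ q.2 ≤ h q.1} := by
  ext ⟨x, y⟩
  constructor
  · rintro ⟨i, hi, heq⟩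
    rw [← heq]
    obtain ⟨hX1, hXN, hlow, hup, _⟩ := walk_inv h hmono N hN i hi.1 hi.2
    exact ⟨hX1, hXN, hlow, hup⟩
  · rintro ⟨hx1, hxN, hy1, hy2⟩
    obtain ⟨i, h1, h2, hw⟩ := walk_mem h hmono N hN x y hx1 hxN hy1 hy2
    exact ⟨i, ⟨h1, h2⟩, hw⟩

end UpRightAux

/-- Any family of `ℓ ≤ k` up-right paths in `{1,…,N} × {1,…,k}` with pairwise
disjoint supports and starting abscissas all equal to `1` can be covered by a
family of `ℓ` up-right paths with pairwise disjoint supports, starting abscissas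
all equal to `1` and ending abscissas all equal to `N`. -/
theorem upRightPaths_extend_to_end_N
    (N k ℓ : ℕ) (hN : 1 ≤ N) (hℓ : 1 ≤ ℓ) (hℓk : ℓ ≤ k)
    (pl : Fin ℓ → ℕ) (π : Fin ℓ → ℕ → ℕ × ℕ)
    (hpl : ∀ r, 1 ≤ pl r)
    (hπ : ∀ r, IsUpRightPath N k (pl r) (π r))
    (hstart : ∀ r, (π r 1).1 = 1)
    (hdisj : ∀ r s, r ≠ s → Disjoint (pathSupport (pl r) (π r)) (pathSupport (pl s) (π s))) :
    ∃ (pl' : Fin ℓ → ℕ) (π' : Fin ℓ → ℕ → ℕ × ℕ),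
      (∀ r, 1 ≤ pl' r) ∧
      (∀ r, IsUpRightPath N k (pl' r) (π' r)) ∧
      (∀ r, (π' r 1).1 = 1) ∧
      (∀ r, (π' r (pl' r)).1 = N) ∧
      (∀ r s, r ≠ s → Disjoint (pathSupport (pl' r) (π' r)) (pathSupport (pl' s) (π' s))) ∧
      (⋃ r, pathSupport (pl r) (π r)) ⊆ ⋃ r, pathSupport (pl' r) (π' r) := by
  classical
  open UpRightAux in
  set g : Fin ℓ → ℕ → ℕ := fun j => Gf (pl j) (π j) with hgdef
  have hgmono : ∀ j, Monotone (g j) := fun j => Gf_mono (pl j) (π j)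
  have hgk : ∀ (j : Fin ℓ) (x : ℕ), g j x ≤ k := fun j x =>
    Gf_le_k N k (pl j) (π j) (hπ j) (hpl j) x
  -- the starting ordinates are pairwise distinct
  have hinj : ∀ i j : Fin ℓ, i ≠ j → (π i 1).2 ≠ (π j 1).2 := by
    intro i j hne heq
    have h1 : π i 1 = π j 1 := Prod.ext (by rw [hstart i, hstart j]) heq
    have m1 : π i 1 ∈ pathSupport (pl i) (π i) := ⟨1, ⟨le_rfl, hpl i⟩, rfl⟩
    have m2 : π i 1 ∈ pathSupport (pl j) (π j) := ⟨1, ⟨le_rfl, hpl j⟩, h1.symm⟩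
    exact Set.disjoint_left.mp (hdisj i j hne) m1 m2
  have hcard : ∀ x y, cnt ℓ g x y ≤ y := by
    intro x y
    have hmaps : ∀ j ∈ Finset.univ.filter fun j => g j x ≤ y,
        (π j 1).2 ∈ Finset.Icc 1 y := by
      intro j hj
      rw [Finset.mem_filter] at hj
      rw [Finset.mem_Icc]
      refine ⟨((hπ j).1 1 le_rfl (hpl j)).2.1, ?_⟩
      exact le_trans (le_max_left _ _) hj.2
    have hinj' : Set.InjOn (fun j => (π j 1).2)
        ((Finset.univ.filter fun j => g j x ≤ y) : Finset (Fin ℓ)) := by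
      intro a _ b _ hab
      by_contra hne
      exact hinj a b hne hab
    have := Finset.card_le_card_of_injOn (fun j => (π j 1).2) hmaps hinj'
    simpa [cnt] using this
  -- the new profiles
  have hDmono : ∀ t, Monotone (dfun ℓ g t) := fun t => dfun_mono_x hgk hgmono t
  have hDge : ∀ t x, ℓ - t ≤ dfun ℓ g t x := fun t x => dfun_ge hgk hcard t x
  have hDk : ∀ t x, dfun ℓ g t x ≤ k := fun t x => dfun_le_k hgk t x
  refine ⟨fun r => N + dfun ℓ g (ℓ - 1 - (r : ℕ)) N - dfun ℓ g (ℓ - 1 - (r : ℕ)) 0,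
    fun r => walk (dfun ℓ g (ℓ - 1 - (r : ℕ))), ?_, ?_, ?_, ?_, ?_, ?_⟩
  · intro r
    show 1 ≤ N + dfun ℓ g (ℓ - 1 - (r : ℕ)) N - dfun ℓ g (ℓ - 1 - (r : ℕ)) 0
    have h1 : dfun ℓ g (ℓ - 1 - (r : ℕ)) 0 ≤ dfun ℓ g (ℓ - 1 - (r : ℕ)) N :=
      hDmono _ (Nat.zero_le N)
    omega
  · intro r
    have hpos : 1 ≤ dfun ℓ g (ℓ - 1 - (r : ℕ)) 0 := by
      have := hDge (ℓ - 1 - (r : ℕ)) 0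
      have := r.isLt
      omega
    exact walk_isPath _ (hDmono _) N k hN hpos (hDk _ N)
  · intro r
    show (walk (dfun ℓ g (ℓ - 1 - (r : ℕ))) 1).1 = 1
    rw [walk_one]
  · intro r
    show (walk (dfun ℓ g (ℓ - 1 - (r : ℕ)))
      (N + dfun ℓ g (ℓ - 1 - (r : ℕ)) N - dfun ℓ g (ℓ - 1 - (r : ℕ)) 0)).1 = N
    rw [walk_last _ (hDmono _) N hN]
  · -- disjointness
    have key : ∀ a b : Fin ℓ, (a : ℕ) < (b : ℕ) →
        Disjoint (pathSupport (N + dfun ℓ g (ℓ - 1 - (a : ℕ)) N - dfun ℓ g (ℓ - 1 - (a : ℕ)) 0)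
            (walk (dfun ℓ g (ℓ - 1 - (a : ℕ)))))
          (pathSupport (N + dfun ℓ g (ℓ - 1 - (b : ℕ)) N - dfun ℓ g (ℓ - 1 - (b : ℕ)) 0)
            (walk (dfun ℓ g (ℓ - 1 - (b : ℕ))))) := by
      intro a b hab
      rw [walk_support _ (hDmono _) N hN, walk_support _ (hDmono _) N hN,
        Set.disjoint_left]
      rintro ⟨x, y⟩ hA hB
      obtain ⟨_, _, _, hA2⟩ := hA
      obtain ⟨_, _, hB1, _⟩ := hB
      dsimp only at hA2 hB1
      have hbL := b.isLt
      have heq : (ℓ - 1 - (b : ℕ)) + ((ℓ - 1 - (a : ℕ)) - (ℓ - 1 - (b : ℕ)) - 1) + 1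
          = ℓ - 1 - (a : ℕ) := by omega
      have hchain := dfun_chain hgk hcard hgmono
        ((ℓ - 1 - (a : ℕ)) - (ℓ - 1 - (b : ℕ)) - 1) (ℓ - 1 - (b : ℕ)) (by omega) x
      rw [heq] at hchain
      omega
    intro r s hrs
    rcases lt_trichotomy (r : ℕ) (s : ℕ) with h | h | h
    · exact key r s h
    · exact absurd (Fin.ext h) hrs
    · exact (key s r h).symm
  · -- coverage
    intro q hq
    simp only [Set.mem_iUnion] at hq ⊢
    obtain ⟨j, i, hi, rfl⟩ := hq
    have hb := (hπ j).1 i hi.1 hi.2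
    have hG1 : g j ((π j i).1 - 1) ≤ (π j i).2 :=
      Gf_low N k (pl j) (π j) (hπ j) i hi.1 hi.2
    have hG2 : (π j i).2 ≤ g j ((π j i).1) := Gf_high (pl j) (π j) i hi.1 hi.2
    set x := (π j i).1 with hxdef
    set y := (π j i).2 with hydef
    set r₀ := cnt ℓ g (x - 1) y with hr₀def
    have hr₀1 : 1 ≤ r₀ := one_le_cnt hG1
    have hr₀ℓ : r₀ ≤ ℓ := cnt_le_card (x - 1) y
    have hs1 : sfun ℓ g r₀ (x - 1) ≤ y := (sfun_le_iff hgk hr₀ℓ (x - 1) y).mpr le_rfl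
    have hs2 : y ≤ sfun ℓ g r₀ x := by
      by_contra hcon
      push_neg at hcon
      have h1y : 1 ≤ y := hb.2.1
      have hle : sfun ℓ g r₀ x ≤ y - 1 := by omega
      have h2 : r₀ ≤ cnt ℓ g x (y - 1) := (sfun_le_iff hgk hr₀ℓ x (y - 1)).mp hle
      have h3 : cnt ℓ g x (y - 1) < cnt ℓ g (x - 1) y := by
        apply Finset.card_lt_card
        have hsub : (Finset.univ.filter fun j' => g j' x ≤ y - 1) ⊆
            Finset.univ.filter fun j' => g j' (x - 1) ≤ y := by
          intro j' hj'
          rw [Finset.mem_filter] at hj' ⊢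
          refine ⟨hj'.1, ?_⟩
          have hmm := hgmono j' (show x - 1 ≤ x by omega)
          have := hj'.2
          omega
        rw [Finset.ssubset_iff_of_subset hsub]
        refine ⟨j, ?_, ?_⟩
        · rw [Finset.mem_filter]; exact ⟨Finset.mem_univ _, hG1⟩
        · rw [Finset.mem_filter]
          push_neg
          intro _
          omega
      omega
    have hcov := dfun_cover hgk (ℓ - r₀) x y
      (by
        have h1 : dfun ℓ g (ℓ - r₀) (x - 1) ≤ sfun ℓ g (ℓ - (ℓ - r₀)) (x - 1) :=
          dfun_le_sfun _ _
        rw [show ℓ - (ℓ - r₀) = r₀ from by omega] at h1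
        exact h1.trans hs1)
      (by
        rw [show ℓ - (ℓ - r₀) = r₀ from by omega]
        exact hs2)
    obtain ⟨u, hu, hu1, hu2⟩ := hcov
    refine ⟨⟨ℓ - 1 - u, by omega⟩, ?_⟩
    have hval : ((⟨ℓ - 1 - u, by omega⟩ : Fin ℓ) : ℕ) = ℓ - 1 - u := rfl
    rw [hval, show ℓ - 1 - (ℓ - 1 - u) = u from by omega,
      walk_support _ (hDmono u) N hN]
    exact ⟨hb.1.1, hb.1.2, hu1, hu2⟩
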